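/- Let n ≥ 2, let A be a set, and let f : Aⁿ → ℝ be a function that is symmetric (invariant under every permutation of its n arguments), strictly positive, and satisfies the reverse Cauchy–Schwarz inequality: f(a₁, …, a_{n−2}, b, c)² ≥ f(a₁, …, a_{n−2}, b, b) · f(a₁, …, a_{n−2}, c, c) for all a₁, …, a_{n−2}, b, c ∈ A. Then for all x₁, …, xₙ ∈ A: f(x₁, …, xₙ)ⁿ ≥ ∏_{i=1}^{n} f(xᵢ, xᵢ, …, xᵢ). More generally, for every 0 < k < n and all x₁, …, xₙ ∈ A: f(x₁, …, x_k, x_{k+1}, …, xₙ)^{n−k} ≥ ∏_{j=k+1}^{n} f(x₁, …, x_k, x_j, x_j, …, x_j), where in the j-th factor x_j is repeated n − k times. -/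

import Mathlib

open Function Finset

section aux
variable {n : ℕ} {A : Type*} {f : (Fin n → A) → ℝ}

private lemma mySwapCS
    (hsymm : ∀ (σ : Equiv.Perm (Fin n)) (x : Fin n → A), f (x ∘ σ) = f x)
    {p q : Fin n} (hpq : p ≠ q)
    (hCS : ∀ (a : Fin n → A) (b c : A),
      f (Function.update (Function.update a p b) q b) *
          f (Function.update (Function.update a p c) q c) ≤
        f (Function.update (Function.update a p b) q c) ^ 2)
    (i j : Fin n) (hij : i ≠ j) (v : Fin n → A) :
    f (Function.update v j (v i)) * f (Function.update v i (v j)) ≤ f v ^ 2 := by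
  classical
  set τ : Equiv.Perm (Fin n) := Equiv.swap p i with hτ
  have hiτq : i ≠ τ q := by
    rcases eq_or_ne q i with h | h
    · have : τ q = p := by rw [h, hτ]; simp [Equiv.swap_apply_right]
      rw [this, ← h]; exact fun e => hpq e.symm
    · have : τ q = q := by
        rw [hτ]; exact Equiv.swap_apply_of_ne_of_ne hpq.symm h
      rw [this]; exact fun e => h e.symm
  set σ : Equiv.Perm (Fin n) := τ.trans (Equiv.swap (τ q) j) with hσ
  have hσp : σ p = i := by
    have : τ p = i := Equiv.swap_apply_left p i
    simp only [hσ, Equiv.trans_apply, this]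
    exact Equiv.swap_apply_of_ne_of_ne hiτq hij
  have hσq : σ q = j := by
    simp only [hσ, Equiv.trans_apply]
    exact Equiv.swap_apply_left _ _
  have key := hCS (v ∘ σ) (v i) (v j)
  have e1 : Function.update (v ∘ σ) p (v i) = v ∘ σ := by
    have : (v ∘ σ) p = v i := by simp [hσp]
    rw [← this, Function.update_eq_self]
  have e2 : Function.update (v ∘ σ) q (v j) = v ∘ σ := by
    have : (v ∘ σ) q = v j := by simp [hσq]
    rw [← this, Function.update_eq_self]
  have e3 : Function.update (v ∘ σ) q (v i) = (Function.update v j (v i)) ∘ σ := by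
    rw [Function.update_comp_equiv v σ]
    congr 1
    rw [← hσq]; simp
  have e4 : Function.update (v ∘ σ) p (v j) = (Function.update v i (v j)) ∘ σ := by
    rw [Function.update_comp_equiv v σ]
    congr 1
    rw [← hσp]; simp
  rw [e1] at key
  have e5 : Function.update ((Function.update v i (v j)) ∘ σ) q (v j)
      = (Function.update v i (v j)) ∘ σ := by
    rw [Function.update_eq_self_iff]
    simp [hσq, Function.update_apply, hij.symm]
  rw [e3, e4, e5, e2, hsymm, hsymm, hsymm] at key
  exact key


private lemma myCore (hpos : ∀ x : Fin n → A, 0 < f x)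
    (hswap : ∀ (i j : Fin n), i ≠ j → ∀ v : Fin n → A,
      f (Function.update v j (v i)) * f (Function.update v i (v j)) ≤ f v ^ 2) :
    ∀ m : ℕ, 1 ≤ m → m ≤ n → ∀ x : Fin n → A,
      ∑ j ∈ Finset.univ.filter (fun j : Fin n => n - m ≤ (j:ℕ)),
        Real.log (f (fun i => if (i:ℕ) < n - m then x i else x j))
        ≤ m * Real.log (f x) := by
  intro m hm
  induction m, hm using Nat.le_induction with
  | base =>
    intro hn x
    have h1 : n - 1 < n := by omega
    have hfilter : Finset.univ.filter (fun j : Fin n => n - 1 ≤ (j:ℕ))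
        = {(⟨n-1, h1⟩ : Fin n)} := by
      ext j
      simp [Fin.ext_iff]
      omega
    rw [hfilter, Finset.sum_singleton]
    have hv : (fun i : Fin n => if (i:ℕ) < n - 1 then x i else x ⟨n-1, h1⟩) = x := by
      funext i
      split_ifs with h
      · rfl
      · have := i.isLt
        congr 1
        exact Fin.ext (by simp; omega)
    rw [hv]
    simp
  | succ m hm1 IH =>
    intro hn x
    set g : (Fin n → A) → ℝ := fun v => Real.log (f v) with hg
    set k : ℕ := n - (m + 1) with hk
    have hkn : k < n := by omega
    have hkm : k + (m + 1) = n := by omega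
    set key : Fin n := ⟨k, hkn⟩ with hkey
    set y : Fin n → A := fun i => x ⟨min (i:ℕ) k, by omega⟩ with hy
    set u : Fin n → ℕ → Fin n → A := fun j s i => if (i:ℕ) < k + s then y i else x j with hu
    have hyk : ∀ i : Fin n, k ≤ (i:ℕ) → y i = x key := by
      intro i hi
      simp only [hy]
      congr 1
      exact Fin.ext (by simp only [hkey, Fin.val_mk]; omega)
    have hyle : ∀ i : Fin n, (i:ℕ) ≤ k → y i = x i := by
      intro i hi
      simp only [hy]
      congr 1
      exact Fin.ext (by simp; omega)
    -- concavity
    have F1 : ∀ (j : Fin n) (s : ℕ), s < m →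
        g (u j (s+2)) + g (u j s) ≤ 2 * g (u j (s+1)) := by
      intro j s hs
      have h1 : k + s < n := by omega
      have h2 : k + s + 1 < n := by omega
      set i₀ : Fin n := ⟨k + s, h1⟩ with hi₀
      set j₀ : Fin n := ⟨k + s + 1, h2⟩ with hj₀
      have hne : i₀ ≠ j₀ := fun e => by
        have := congrArg Fin.val e; simp [hi₀, hj₀] at this
      have hval₀ : (u j (s+1)) i₀ = x key := by
        simp only [hu]
        rw [if_pos (show (i₀:ℕ) < k + (s+1) by show k + s < k + (s+1); omega)]
        exact hyk i₀ (by show k ≤ k + s; omega)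
      have hval₁ : (u j (s+1)) j₀ = x j := by
        simp only [hu]
        rw [if_neg (show ¬((j₀:ℕ) < k + (s+1)) by show ¬(k+s+1 < k+(s+1)); omega)]
      have hu2 : Function.update (u j (s+1)) j₀ ((u j (s+1)) i₀) = u j (s+2) := by
        funext i
        rcases eq_or_ne i j₀ with h | h
        · rw [h, Function.update_self, hval₀]
          simp only [hu]
          rw [if_pos (show (j₀:ℕ) < k + (s+2) by show k+s+1 < k+(s+2); omega)]
          exact (hyk j₀ (by show k ≤ k+s+1; omega)).symm
        · rw [Function.update_of_ne h]
          have hvne : (i:ℕ) ≠ k + s + 1 := fun e => h (Fin.ext e)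
          simp only [hu]
          split_ifs with ha hb
          · rfl
          · omega
          · omega
          · rfl
      have hu0 : Function.update (u j (s+1)) i₀ ((u j (s+1)) j₀) = u j s := by
        funext i
        rcases eq_or_ne i i₀ with h | h
        · rw [h, Function.update_self, hval₁]
          simp only [hu]
          rw [if_neg (show ¬((i₀:ℕ) < k + s) by show ¬(k+s < k+s); omega)]
        · rw [Function.update_of_ne h]
          have hvne : (i:ℕ) ≠ k + s := fun e => h (Fin.ext e)
          simp only [hu]
          split_ifs with ha hb
          · rfl
          · omega
          · omega
          · rfl
      have := hswap i₀ j₀ hne (u j (s+1))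
      rw [hu2, hu0] at this
      have hlog := Real.log_le_log (mul_pos (hpos _) (hpos _)) this
      rw [Real.log_mul (hpos _).ne' (hpos _).ne', Real.log_pow] at hlog
      simp only [hg]
      push_cast at hlog
      linarith
    have F2 : ∀ (j : Fin n) (s : ℕ), s ≤ m →
        g (u j (s+1)) - g (u j s) ≤ g (u j 1) - g (u j 0) := by
      intro j s
      induction s with
      | zero => intro _; exact le_rfl
      | succ s ih =>
        intro hs
        have h1 := F1 j s (by omega)
        have h2 := ih (by omega)
        linarith
    have F3 : ∀ (j : Fin n) (t : ℕ), t ≤ m →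
        g (u j (t+1)) ≤ g (u j 1) + t * (g (u j 1) - g (u j 0)) := by
      intro j t
      induction t with
      | zero => intro _; simp
      | succ t ih =>
        intro ht
        have h1 := F2 j (t+1) ht
        have h2 := ih (by omega)
        push_cast
        push_cast at h2
        linarith
    -- identifications
    have A1 : ∀ j : Fin n, u j 0 = fun i : Fin n => if (i:ℕ) < k then x i else x j := by
      intro j
      funext i
      simp only [hu, Nat.add_zero]
      split_ifs with h
      · exact hyle i (by omega)
      · rfl
    have A2 : ∀ j : Fin n, u j 1 = fun i : Fin n => if (i:ℕ) < k + 1 then x i else x j := by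
      intro j
      funext i
      simp only [hu]
      split_ifs with h
      · exact hyle i (by omega)
      · rfl
    have A3 : ∀ j : Fin n,
        u j (m+1) = fun i : Fin n => if (i:ℕ) < k then x i else x key := by
      intro j
      funext i
      simp only [hu]
      rw [if_pos (by omega)]
      split_ifs with h
      · exact hyle i (by omega)
      · exact hyk i (by omega)
    set D : Fin n → A := fun i : Fin n => if (i:ℕ) < k then x i else x key with hD
    -- filter facts
    set T : Finset (Fin n) := Finset.univ.filter (fun j : Fin n => k + 1 ≤ (j:ℕ)) with hT
    have hkeyT : key ∉ T := by simp [hT, hkey]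
    have hsplit : Finset.univ.filter (fun j : Fin n => k ≤ (j:ℕ))
        = insert key T := by
      ext j
      simp [hT, hkey, Fin.ext_iff]
      omega
    have hcardT : T.card = m := by
      have h1 : k + 1 < n := by omega
      have : T = Finset.Ici (⟨k+1, h1⟩ : Fin n) := by
        ext j
        simp [hT, Fin.le_def]
      rw [this, Fin.card_Ici]
      simp
      omega
    -- apply IH
    have hIH := IH (by omega) x
    have hnm : n - m = k + 1 := by omega
    rw [hnm] at hIH
    have hIH' : ∑ j ∈ T, g (u j 1) ≤ m * Real.log (f x) := by
      calc ∑ j ∈ T, g (u j 1)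
          = ∑ j ∈ T, Real.log (f (fun i : Fin n => if (i:ℕ) < k + 1 then x i else x j)) := by
            refine Finset.sum_congr rfl fun j _ => ?_
            rw [A2 j]
        _ ≤ m * Real.log (f x) := hIH
    -- per-j bound
    have hjbound : ∀ j ∈ T, (m:ℝ) * g (u j 0) + g D ≤ ((m:ℝ) + 1) * g (u j 1) := by
      intro j _
      have h3 := F3 j m le_rfl
      have hDj : g (u j (m+1)) = g D := by rw [A3 j]
      rw [hDj] at h3
      linarith
    have hsum1 : ∑ j ∈ T, ((m:ℝ) * g (u j 0) + g D) ≤ ∑ j ∈ T, ((m:ℝ)+1) * g (u j 1) :=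
      Finset.sum_le_sum hjbound
    rw [Finset.sum_add_distrib, ← Finset.mul_sum, Finset.sum_const, hcardT,
      ← Finset.mul_sum] at hsum1
    have hsum2 : ((m:ℝ)+1) * ∑ j ∈ T, g (u j 1) ≤ ((m:ℝ)+1) * (m * Real.log (f x)) :=
      mul_le_mul_of_nonneg_left hIH' (by positivity)
    rw [hsplit, Finset.sum_insert hkeyT]
    have hWkey : Real.log (f fun i : Fin n => if (i:ℕ) < k then x i else x key) = g D := rfl
    have hS0 : ∑ j ∈ T, Real.log (f fun i : Fin n => if (i:ℕ) < k then x i else x j)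
        = ∑ j ∈ T, g (u j 0) := by
      refine Finset.sum_congr rfl fun j _ => ?_
      rw [A1 j]
    rw [hWkey, hS0]
    have hmpos : (0:ℝ) < m := by exact_mod_cast Nat.pos_of_ne_zero (by omega)
    have hfin : (m:ℝ) * (g D + ∑ j ∈ T, g (u j 0))
        ≤ (m:ℝ) * (((m:ℝ)+1) * Real.log (f x)) := by
      simp only [nsmul_eq_mul] at hsum1
      nlinarith [hsum1, hsum2]
    have := le_of_mul_le_mul_left (by linarith [hfin] : (m:ℝ) * (g D + ∑ j ∈ T, g (u j 0)) ≤ (m:ℝ) * (((m:ℝ)+1) * Real.log (f x))) hmpos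
    push_cast
    linarith
end aux


/-- Iterated reverse Cauchy–Schwarz: a symmetric positive function of `n` arguments
satisfying the reverse Cauchy–Schwarz inequality in its last two arguments satisfies
`f(x₁,…,xₙ)ⁿ ≥ ∏ᵢ f(xᵢ,…,xᵢ)`, and more generally the partial-diagonal inequality. -/
theorem stmt12 (n : ℕ) (hn : 2 ≤ n) (A : Type*) (f : (Fin n → A) → ℝ)
    (hsymm : ∀ (σ : Equiv.Perm (Fin n)) (x : Fin n → A), f (x ∘ σ) = f x)
    (hpos : ∀ x : Fin n → A, 0 < f x)
    (p q : Fin n) (hp : (p : ℕ) = n - 2) (hq : (q : ℕ) = n - 1)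
    (hCS : ∀ (a : Fin n → A) (b c : A),
      f (Function.update (Function.update a p b) q b) *
          f (Function.update (Function.update a p c) q c) ≤
        f (Function.update (Function.update a p b) q c) ^ 2) :
    (∀ x : Fin n → A, (∏ i, f (fun _ => x i)) ≤ f x ^ n) ∧
    (∀ k : ℕ, 0 < k → k < n → ∀ x : Fin n → A,
      (∏ j ∈ Finset.univ.filter fun j : Fin n => k ≤ (j : ℕ),
        f (fun i => if (i : ℕ) < k then x i else x j)) ≤ f x ^ (n - k)) := by
  have hpq : p ≠ q := fun e => by
    have := congrArg Fin.val e
    omega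
  have hswap := mySwapCS hsymm hpq hCS
  have core := myCore hpos hswap
  constructor
  · intro x
    have h := core n (by omega) le_rfl x
    have h0 : n - n = 0 := by omega
    rw [h0] at h
    have hfil : Finset.univ.filter (fun j : Fin n => 0 ≤ (j:ℕ)) = Finset.univ := by
      simp
    rw [hfil] at h
    have hlog : Real.log (∏ i, f (fun _ => x i)) ≤ Real.log (f x ^ n) := by
      rw [Real.log_prod (fun i _ => (hpos _).ne'), Real.log_pow]
      calc ∑ i, Real.log (f fun _ => x i)
          = ∑ j, Real.log (f (fun i : Fin n => if (i:ℕ) < 0 then x i else x j)) := by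
            refine Finset.sum_congr rfl fun j _ => ?_
            congr 1
        _ ≤ n * Real.log (f x) := h
    exact (Real.log_le_log_iff (Finset.prod_pos fun i _ => hpos _) (pow_pos (hpos x) n)).mp hlog
  · intro k hk0 hkn x
    have h := core (n - k) (by omega) (by omega) x
    have h0 : n - (n - k) = k := by omega
    rw [h0] at h
    have hlog : Real.log (∏ j ∈ Finset.univ.filter fun j : Fin n => k ≤ (j:ℕ),
        f (fun i => if (i:ℕ) < k then x i else x j)) ≤ Real.log (f x ^ (n - k)) := by
      rw [Real.log_prod (fun i _ => (hpos _).ne'), Real.log_pow]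
      exact h
    exact (Real.log_le_log_iff (Finset.prod_pos fun i _ => hpos _)
      (pow_pos (hpos x) _)).mp hlog
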